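/- Let f₁,…,f_M : ℝ^d → ℝ be convex, 0 ≤ O < M, and d + 1 < M − O. Define φ(θ) as the (O+1)-st largest value among f₁(θ),…,f_M(θ). Then every global minimizer of φ is a global minimizer of φ_S(θ) = max_{m ∈ S} f_m(θ) for some subset S ⊆ {1,…,M} with |S| = d + 1. -/

import Mathlib

/-- The (O+1)-st largest component of `z`. -/
noncomputable def pctl {M : ℕ} (O : ℕ) (hO : O < M) (z : Fin M → ℝ) : ℝ :=
  z (Tuple.sort z ⟨M - 1 - O, by omega⟩)

/-- At least `O + 1` components are `≥ pctl`. -/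
lemma pctl_card_ge {M O : ℕ} (hO : O < M) (z : Fin M → ℝ) :
    O + 1 ≤ (Finset.univ.filter (fun m => pctl O hO z ≤ z m)).card := by
  classical
  set j0 : Fin M := ⟨M - 1 - O, by omega⟩ with hj0
  set σ := Tuple.sort z with hσ
  have hsub : (Finset.Ici j0).image σ ⊆
      Finset.univ.filter (fun m => pctl O hO z ≤ z m) := by
    intro m hm
    rcases Finset.mem_image.mp hm with ⟨i, hi, rfl⟩
    simp only [Finset.mem_filter, Finset.mem_univ, true_and]
    exact Tuple.monotone_sort z (Finset.mem_Ici.mp hi)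
  have hcard : ((Finset.Ici j0).image σ).card = O + 1 := by
    rw [Finset.card_image_of_injective _ σ.injective, Fin.card_Ici]
    simp only [hj0]
    omega
  calc O + 1 = ((Finset.Ici j0).image σ).card := hcard.symm
    _ ≤ _ := Finset.card_le_card hsub

/-- At least `M - O` components are `≤ pctl`. -/
lemma pctl_card_le {M O : ℕ} (hO : O < M) (z : Fin M → ℝ) :
    M - O ≤ (Finset.univ.filter (fun m => z m ≤ pctl O hO z)).card := by
  classical
  set j0 : Fin M := ⟨M - 1 - O, by omega⟩ with hj0
  set σ := Tuple.sort z with hσ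
  have hsub : (Finset.Iic j0).image σ ⊆
      Finset.univ.filter (fun m => z m ≤ pctl O hO z) := by
    intro m hm
    rcases Finset.mem_image.mp hm with ⟨i, hi, rfl⟩
    simp only [Finset.mem_filter, Finset.mem_univ, true_and]
    exact Tuple.monotone_sort z (Finset.mem_Iic.mp hi)
  have hcard : ((Finset.Iic j0).image σ).card = M - O := by
    rw [Finset.card_image_of_injective _ σ.injective, Fin.card_Iic]
    simp only [hj0]
    omega
  calc M - O = ((Finset.Iic j0).image σ).card := hcard.symm
    _ ≤ _ := Finset.card_le_card hsub

/-- Theorem 2: with convex residuals and d + 1 < M - O, every global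
minimizer of the percentile objective φ is a global minimizer of φ_S for some
subset S of size d + 1. -/
theorem stmt_9 (d M O : ℕ) (hO : O < M) (hdim : d + 1 < M - O)
    (fs : Fin M → EuclideanSpace ℝ (Fin d) → ℝ)
    (hconv : ∀ m, ConvexOn ℝ Set.univ (fs m))
    (θstar : EuclideanSpace ℝ (Fin d))
    (hmin : ∀ θ, pctl O hO (fun m => fs m θstar) ≤ pctl O hO (fun m => fs m θ)) :
    ∃ S : Finset (Fin M), S.card = d + 1 ∧ ∃ hS : S.Nonempty,
      ∀ θ, S.sup' hS (fun m => fs m θstar) ≤ S.sup' hS (fun m => fs m θ) := by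
  classical
  by_contra hcon
  push_neg at hcon
  set v : ℝ := pctl O hO (fun m => fs m θstar) with hv
  set T : Finset (Fin M) := Finset.univ.filter (fun m => fs m θstar ≤ v) with hT
  have hTcard : M - O ≤ T.card := pctl_card_le hO (fun m => fs m θstar)
  -- strict sublevel sets
  set C : Fin M → Set (EuclideanSpace ℝ (Fin d)) := fun m => {θ | fs m θ < v} with hC
  have hCconv : ∀ m ∈ T, Convex ℝ (C m) := by
    intro m _
    have := (hconv m).convex_lt v
    convert this using 1
    · rfl
    ext θ; simp [hC]
  have hrank : Module.finrank ℝ (EuclideanSpace ℝ (Fin d)) = d :=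
    finrank_euclideanSpace_fin
  have hinter : ∀ I ⊆ T, I.card = Module.finrank ℝ (EuclideanSpace ℝ (Fin d)) + 1 →
      (⋂ i ∈ I, C i).Nonempty := by
    intro I hIT hIcard
    rw [hrank] at hIcard
    have hIne : I.Nonempty := Finset.card_pos.mp (by omega)
    obtain ⟨θI, hθI⟩ := hcon I hIcard hIne
    refine ⟨θI, Set.mem_biInter fun m hm => ?_⟩
    have h1 : fs m θI ≤ I.sup' hIne (fun m => fs m θI) :=
      Finset.le_sup' (fun m => fs m θI) hm
    have h2 : I.sup' hIne (fun m => fs m θstar) ≤ v := by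
      apply Finset.sup'_le
      intro m' hm'
      have := hIT hm'
      simp only [hT, Finset.mem_filter] at this
      exact this.2
    exact Set.mem_setOf.mpr (lt_of_le_of_lt h1 (lt_of_lt_of_le hθI h2))
  have hhelly : (⋂ i ∈ T, C i).Nonempty :=
    Convex.helly_theorem (𝕜 := ℝ) (by rw [hrank]; omega) hCconv hinter
  obtain ⟨θ0, hθ0⟩ := hhelly
  -- θ0 makes all f_m, m ∈ T, strictly below v, contradicting optimality of θstar
  simp only [Set.mem_iInter] at hθ0
  have hlt : ∀ m ∈ T, fs m θ0 < v := fun m hm => hθ0 m hm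
  have hge : O + 1 ≤ (Finset.univ.filter
      (fun m => pctl O hO (fun m => fs m θ0) ≤ fs m θ0)).card :=
    pctl_card_ge hO (fun m => fs m θ0)
  have hvle : v ≤ pctl O hO (fun m => fs m θ0) := hmin θ0
  have hdisj : Disjoint T (Finset.univ.filter
      (fun m => pctl O hO (fun m => fs m θ0) ≤ fs m θ0)) := by
    rw [Finset.disjoint_left]
    intro m hmT hmF
    simp only [Finset.mem_filter, Finset.mem_univ, true_and] at hmF
    exact absurd (lt_of_lt_of_le (hlt m hmT) (le_trans hvle hmF)) (lt_irrefl _)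
  have hsum := Finset.card_union_of_disjoint hdisj
  have hle := Finset.card_le_univ
    (T ∪ Finset.univ.filter (fun m => pctl O hO (fun m => fs m θ0) ≤ fs m θ0))
  rw [hsum, Fintype.card_fin] at hle
  omega
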